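/- Let g₄ be the Lie algebra with (1,0)-basis satisfying dω¹ = i ω¹∧(ω³+ω̄³), dω² = −i ω²∧(ω³+ω̄³), dω³ = ± ω¹∧ω̄¹. A Hermitian form 2F = i(r²ω¹∧ω̄¹ + s²ω²∧ω̄² + t²ω³∧ω̄³) + u ω¹∧ω̄² − ū ω²∧ω̄¹ + v ω²∧ω̄³ − v̄ ω³∧ω̄² + z ω¹∧ω̄³ − z̄ ω³∧ω̄¹ (with positivity constraints r²s² > |u|², s²t² > |v|², r²t² > |z|², r²s²t² + 2Re(i ū v̄ z) > t²|u|² + r²|v|² + s²|z|²) satisfies ∂∂̄F = 0 if and only if u = 0. -/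
import Mathlib


noncomputable section

/-- The space of invariant complex forms: the exterior algebra over the span of
`ω¹, ω², ω³, ω̄¹, ω̄², ω̄³` (indexed `0,…,5`). -/
abbrev Lambda : Type := ExteriorAlgebra ℂ (Fin 6 → ℂ)

/-- The generators `ω¹, ω², ω³, ω̄¹, ω̄², ω̄³` as degree-one elements. -/
def w (i : Fin 6) : Lambda := ExteriorAlgebra.ι ℂ (Pi.single i 1)

/-- Antiderivation property (Leibniz rule against `1`-forms): the defining extension
property of (the bigraded pieces of) the Chevalley–Eilenberg differential. -/
def IsAntideriv (D : Lambda →ₗ[ℂ] Lambda) : Prop :=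
  D 1 = 0 ∧ ∀ (v : Fin 6 → ℂ) (x : Lambda),
    D (ExteriorAlgebra.ι ℂ v * x) =
      D (ExteriorAlgebra.ι ℂ v) * x - ExteriorAlgebra.ι ℂ v * D x

/-- The generic Hermitian form
`2F = i(r²ω¹∧ω̄¹ + s²ω²∧ω̄² + t²ω³∧ω̄³) + uω¹∧ω̄² − ūω²∧ω̄¹ + vω²∧ω̄³ − v̄ω³∧ω̄²
  + zω¹∧ω̄³ − z̄ω³∧ω̄¹`. -/
def Fherm (r s t : ℝ) (u v z : ℂ) : Lambda :=
  (1 / 2 : ℂ) •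
    (Complex.I • ((r : ℂ) ^ 2 • (w 0 * w 3) + (s : ℂ) ^ 2 • (w 1 * w 4) +
        (t : ℂ) ^ 2 • (w 2 * w 5)) +
      u • (w 0 * w 4) - (starRingEnd ℂ) u • (w 1 * w 3) +
      v • (w 1 * w 5) - (starRingEnd ℂ) v • (w 2 * w 4) +
      z • (w 0 * w 5) - (starRingEnd ℂ) z • (w 2 * w 3))

/-- Positivity constraints making `Fherm r s t u v z` a Hermitian metric. -/
def HermPos (r s t : ℝ) (u v z : ℂ) : Prop :=
  r ≠ 0 ∧ s ≠ 0 ∧ t ≠ 0 ∧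
  r ^ 2 * s ^ 2 > Complex.normSq u ∧ s ^ 2 * t ^ 2 > Complex.normSq v ∧
  r ^ 2 * t ^ 2 > Complex.normSq z ∧
  r ^ 2 * s ^ 2 * t ^ 2 +
      2 * (Complex.I * (starRingEnd ℂ) u * (starRingEnd ℂ) v * z).re >
    t ^ 2 * Complex.normSq u + r ^ 2 * Complex.normSq v + s ^ 2 * Complex.normSq z

/- Auxiliary lemmas -/

lemma leib {D : Lambda →ₗ[ℂ] Lambda} (h : IsAntideriv D) (i : Fin 6) (x : Lambda) :
    D (w i * x) = D (w i) * x - w i * D x := h.2 (Pi.single i 1) x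

lemma w_sq (i : Fin 6) : w i * w i = 0 := ExteriorAlgebra.ι_sq_zero _

lemma w_sq' (i : Fin 6) (x : Lambda) : w i * (w i * x) = 0 := by
  rw [← mul_assoc, w_sq, zero_mul]

lemma w_anticomm (i j : Fin 6) : w i * w j = -(w j * w i) := by
  have := ExteriorAlgebra.ι_add_mul_swap (R := ℂ) (Pi.single i 1 : Fin 6 → ℂ) (Pi.single j 1)
  unfold w; linear_combination (norm := module) this

lemma w_swap (i j : Fin 6) (_ : j < i) : w i * w j = -(w j * w i) := w_anticomm i j

lemma w_swap' (i j : Fin 6) (_ : j < i) (x : Lambda) :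
    w i * (w j * x) = -(w j * (w i * x)) := by
  rw [← mul_assoc, w_anticomm, neg_mul, mul_assoc]

/-- Coefficient-extraction functional on degree-4 monomials. -/
def pick (a b c d : Fin 6) : Lambda →ₗ[ℂ] ℂ :=
  ExteriorAlgebra.liftAlternating (Pi.single 4
    ((Matrix.detRowAlternating : AlternatingMap ℂ (Fin 4 → ℂ) ℂ (Fin 4)).compLinearMap
      (LinearMap.funLeft ℂ ℂ ![a, b, c, d])))

lemma wmul_eq_iMulti (i j k l : Fin 6) :
    w i * (w j * (w k * w l)) =
      ExteriorAlgebra.ιMulti ℂ 4 ![Pi.single i 1, Pi.single j 1, Pi.single k 1, Pi.single l 1] := by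
  simp [ExteriorAlgebra.ιMulti_apply, List.ofFn_succ, w, mul_assoc]

lemma pick_apply (a b c d i j k l : Fin 6) :
    pick a b c d (w i * (w j * (w k * w l))) =
      Matrix.det (Matrix.of fun p q : Fin 4 =>
        (Pi.single (![i,j,k,l] p) 1 : Fin 6 → ℂ) (![a,b,c,d] q)) := by
  rw [wmul_eq_iMulti, pick, ExteriorAlgebra.liftAlternating_apply_ιMulti, Pi.single_eq_same]
  simp [Matrix.detRowAlternating, LinearMap.funLeft]
  congr 1
  ext p q
  fin_cases p <;> simp [Matrix.of_apply, Matrix.vecHead, Matrix.vecTail]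

lemma pick_m1 : pick 0 2 4 5 (w 0 * (w 2 * (w 4 * w 5))) = 1 := by
  rw [pick_apply]
  simp (config := { decide := true }) [Matrix.det_succ_row_zero, Fin.sum_univ_succ,
    Pi.single_apply]

lemma pick_m2 : pick 0 2 4 5 (w 1 * (w 2 * (w 3 * w 5))) = 0 := by
  rw [pick_apply]
  simp (config := { decide := true }) [Matrix.det_succ_row_zero, Fin.sum_univ_succ,
    Pi.single_apply]

/-- on `g₄` (`dω¹ = iω¹∧(ω³+ω̄³)`, `dω² = −iω²∧(ω³+ω̄³)`,
`dω³ = ±ω¹∧ω̄¹`), a Hermitian form `F` is SKT (`∂∂̄F = 0`) iff `u = 0`. -/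
theorem stmt11 (ε : ℂ) (hε : ε = 1 ∨ ε = -1)
    (Dp Db : Lambda →ₗ[ℂ] Lambda) (hDp : IsAntideriv Dp) (hDb : IsAntideriv Db)
    (hp0 : Dp (w 0) = Complex.I • (w 0 * w 2))
    (hp1 : Dp (w 1) = -Complex.I • (w 1 * w 2))
    (hp2 : Dp (w 2) = 0)
    (hp3 : Dp (w 3) = -Complex.I • (w 3 * w 2))
    (hp4 : Dp (w 4) = Complex.I • (w 4 * w 2))
    (hp5 : Dp (w 5) = ε • (w 3 * w 0))
    (hb0 : Db (w 0) = Complex.I • (w 0 * w 5))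
    (hb1 : Db (w 1) = -Complex.I • (w 1 * w 5))
    (hb2 : Db (w 2) = ε • (w 0 * w 3))
    (hb3 : Db (w 3) = -Complex.I • (w 3 * w 5))
    (hb4 : Db (w 4) = Complex.I • (w 4 * w 5))
    (hb5 : Db (w 5) = 0)
    (r s t : ℝ) (u v z : ℂ) (hF : HermPos r s t u v z) :
    Dp (Db (Fherm r s t u v z)) = 0 ↔ u = 0 := by
  have key : Dp (Db (Fherm r s t u v z)) =
      (2 * u) • (w 0 * (w 2 * (w 4 * w 5))) -
        (2 * (starRingEnd ℂ) u) • (w 1 * (w 2 * (w 3 * w 5))) := by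
    simp (config := { decide := true }) only [Fherm, map_smul, map_add, map_sub, map_neg,
      smul_mul_assoc, mul_smul_comm, mul_assoc,
      leib hDp, leib hDb, hp0, hp1, hp2, hp3, hp4, hp5, hb0, hb1, hb2, hb3, hb4, hb5,
      w_sq, w_sq', w_swap, w_swap', mul_zero, zero_mul, smul_zero, zero_smul, map_zero,
      neg_mul, mul_neg, smul_neg, neg_neg, neg_zero, sub_zero, zero_sub, add_zero, zero_add,
      smul_smul, neg_smul, mul_sub, mul_add, sub_self, smul_sub, smul_add, Complex.I_mul_I]
    match_scalars <;> ring
  rw [key]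
  constructor
  · intro h
    have h2 := congrArg (pick 0 2 4 5) h
    simp only [map_sub, map_smul, pick_m1, pick_m2, map_zero, mul_one, mul_zero,
      smul_eq_mul, sub_zero] at h2
    exact (mul_eq_zero.mp h2).resolve_left two_ne_zero
  · intro h
    simp [h]
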